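/- Let k be a division ring and P ⊆ k^n a purely left affine 2-plane. Then for every point x ∈ P, there is at most one right affine line through x contained in P. -/

import Mathlib

open Function Set

variable {k : Type*}

section Aux
open MulOpposite

lemma aux_mem_translate {R M : Type*} [Ring R] [AddCommGroup M] [Module R M]
    (T : Submodule R M) (x y : M) : y ∈ (x + ·) '' (T : Set M) ↔ y - x ∈ T := by
  constructor
  · rintro ⟨t, ht, rfl⟩; simpa using ht
  · intro h; exact ⟨y - x, h, by show x + (y - x) = y; rw [add_comm, sub_add_cancel]⟩

lemma aux_translate {R M : Type*} [Ring R] [AddCommGroup M] [Module R M]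
    (T : Submodule R M) {v x : M} (hx : x ∈ (v + ·) '' (T : Set M)) :
    (v + ·) '' (T : Set M) = (x + ·) '' (T : Set M) := by
  obtain ⟨t₀, ht₀, hx⟩ := hx
  ext y
  constructor
  · rintro ⟨t, ht, rfl⟩
    exact ⟨t - t₀, sub_mem ht ht₀, by rw [← hx]; beta_reduce; abel⟩
  · rintro ⟨t, ht, rfl⟩
    exact ⟨t₀ + t, add_mem ht₀ ht, by rw [← hx]; beta_reduce; abel⟩

lemma aux_line_gen [DivisionRing k] {n : ℕ} {A : Set (Fin n → k)} (h : ∃ (v : Fin n → k) (S : Submodule kᵐᵒᵖ (Fin n → k)),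
      A = (v + ·) '' (S : Set (Fin n → k)) ∧ Module.finrank kᵐᵒᵖ S = 1)
    {x : Fin n → k} (hx : x ∈ A) :
    ∃ w : Fin n → k, w ≠ 0 ∧ A = (x + ·) '' (Submodule.span kᵐᵒᵖ {w} : Set (Fin n → k)) := by
  obtain ⟨v, T, hA, hT⟩ := h
  obtain ⟨⟨w, hwT⟩, hw0, hgen⟩ := finrank_eq_one_iff'.mp hT
  have hw0' : w ≠ 0 := by simpa [Submodule.mk_eq_zero] using hw0
  have hTspan : T = Submodule.span kᵐᵒᵖ {w} := by
    apply le_antisymm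
    · intro u hu
      obtain ⟨c, hc⟩ := hgen ⟨u, hu⟩
      exact Submodule.mem_span_singleton.mpr ⟨c, congrArg Subtype.val hc⟩
    · rw [Submodule.span_le]; simpa using hwT
  refine ⟨w, hw0', ?_⟩
  rw [hA, hTspan]
  exact aux_translate _ (by rw [hA, hTspan] at hx; exact hx)

/-- conjugation trick: if all right multiples of `w` are left multiples of `w`,
then all left multiples of `w` are right multiples. -/
lemma aux_conj [DivisionRing k] {n : ℕ} {w : Fin n → k} (hw0 : w ≠ 0)
    (h : ∀ a : k, op a • w ∈ Submodule.span k {w}) (d : k) :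
    d • w ∈ Submodule.span kᵐᵒᵖ {w} := by
  obtain ⟨i, hi⟩ : ∃ i, w i ≠ 0 := by
    by_contra hc; push_neg at hc; exact hw0 (funext hc)
  set a : k := (w i)⁻¹ * (d * w i) with ha
  obtain ⟨e, he⟩ := Submodule.mem_span_singleton.mp (h a)
  have hei : e * w i = d * w i := by
    have := congrFun he i
    simp only [Pi.smul_apply, smul_eq_mul, MulOpposite.smul_eq_mul_unop,
      MulOpposite.unop_op] at this
    rw [this, ha, ← mul_assoc, mul_inv_cancel₀ hi, one_mul]
  have hed : e = d := mul_right_cancel₀ hi hei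
  exact Submodule.mem_span_singleton.mpr ⟨MulOpposite.op a, by rw [← he, hed]⟩

end Aux

/-- A set is a left `k`-subspace of `k^n`. -/
def IsLeftSub [DivisionRing k] {n : ℕ} (A : Set (Fin n → k)) : Prop :=
  ∃ S : Submodule k (Fin n → k), A = (S : Set (Fin n → k))

/-- A set is a right `k`-subspace of `k^n` (right modules encoded via `kᵐᵒᵖ`). -/
def IsRightSub [DivisionRing k] {n : ℕ} (A : Set (Fin n → k)) : Prop :=
  ∃ S : Submodule kᵐᵒᵖ (Fin n → k), A = (S : Set (Fin n → k))

/-- A set is a left affine subspace of `k^n`: a translate of a left subspace. -/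
def IsLeftAff [DivisionRing k] {n : ℕ} (A : Set (Fin n → k)) : Prop :=
  ∃ (v : Fin n → k) (S : Submodule k (Fin n → k)), A = (v + ·) '' (S : Set (Fin n → k))

/-- A set is a right affine subspace of `k^n`: a translate of a right subspace. -/
def IsRightAff [DivisionRing k] {n : ℕ} (A : Set (Fin n → k)) : Prop :=
  ∃ (v : Fin n → k) (S : Submodule kᵐᵒᵖ (Fin n → k)), A = (v + ·) '' (S : Set (Fin n → k))

/-- `A` is a left affine subspace of dimension `d`. -/
def HasDimL [DivisionRing k] {n : ℕ} (A : Set (Fin n → k)) (d : ℕ) : Prop :=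
  ∃ (v : Fin n → k) (S : Submodule k (Fin n → k)),
    A = (v + ·) '' (S : Set (Fin n → k)) ∧ Module.finrank k S = d

/-- `A` is a right affine subspace of dimension `d`. -/
def HasDimR [DivisionRing k] {n : ℕ} (A : Set (Fin n → k)) (d : ℕ) : Prop :=
  ∃ (v : Fin n → k) (S : Submodule kᵐᵒᵖ (Fin n → k)),
    A = (v + ·) '' (S : Set (Fin n → k)) ∧ Module.finrank kᵐᵒᵖ S = d


/-- Lemma 5 (notmorethanone): a purely left affine 2-plane contains at most one right
affine line through any of its points. -/
theorem stmt_8 [DivisionRing k] {n : ℕ} (P : Set (Fin n → k))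
    (hP : HasDimL P 2) (hnotR : ¬ IsRightAff P)
    (x : Fin n → k) (hx : x ∈ P)
    (L L' : Set (Fin n → k)) (hL : HasDimR L 1) (hL' : HasDimR L' 1)
    (hxL : x ∈ L) (hxL' : x ∈ L') (hLP : L ⊆ P) (hL'P : L' ⊆ P) :
    L = L' := by
  classical
  open MulOpposite in
  obtain ⟨v, S, hPS, hS2⟩ := hP
  have hPx : P = (x + ·) '' (S : Set (Fin n → k)) := by
    rw [hPS]; exact aux_translate _ (hPS ▸ hx)
  obtain ⟨w, hw0, hLx⟩ := aux_line_gen hL hxL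
  obtain ⟨w', hw'0, hL'x⟩ := aux_line_gen hL' hxL'
  -- all right multiples of w, w' are in S
  have hwS : ∀ a : k, op a • w ∈ S := by
    intro a
    have h1 : x + op a • w ∈ L :=
      hLx ▸ ⟨op a • w, Submodule.mem_span_singleton.mpr ⟨op a, rfl⟩, rfl⟩
    have h2 := hLP h1
    rw [hPx, aux_mem_translate] at h2
    simpa using h2
  have hw'S : ∀ a : k, op a • w' ∈ S := by
    intro a
    have h1 : x + op a • w' ∈ L' :=
      hL'x ▸ ⟨op a • w', Submodule.mem_span_singleton.mpr ⟨op a, rfl⟩, rfl⟩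
    have h2 := hL'P h1
    rw [hPx, aux_mem_translate] at h2
    simpa using h2
  by_cases hB : (∀ a : k, op a • w ∈ Submodule.span k {w}) ∧
      (∀ a : k, op a • w' ∈ Submodule.span k {w})
  · -- case B: everything lies on the left line k•w, and then L = L'
    obtain ⟨hBw, hBw'⟩ := hB
    obtain ⟨c, hc⟩ := Submodule.mem_span_singleton.mp (by simpa using hBw' 1)
    have hc0 : c ≠ 0 := fun h => hw'0 (by rw [← hc, h, zero_smul])
    have hBw'w' : ∀ a : k, op a • w' ∈ Submodule.span k {w'} := by
      intro a
      obtain ⟨e, he⟩ := Submodule.mem_span_singleton.mp (hBw' a)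
      have hwc : c⁻¹ • w' = w := by rw [← hc, smul_smul, inv_mul_cancel₀ hc0, one_smul]
      exact Submodule.mem_span_singleton.mpr ⟨e * c⁻¹, by rw [mul_smul, hwc, he]⟩
    have hspan : Submodule.span kᵐᵒᵖ {w} = Submodule.span kᵐᵒᵖ {w'} := by
      apply le_antisymm
      · rw [Submodule.span_le, Set.singleton_subset_iff]
        have : w = c⁻¹ • w' := by rw [← hc, smul_smul, inv_mul_cancel₀ hc0, one_smul]
        rw [this]
        exact aux_conj hw'0 hBw'w' c⁻¹
      · rw [Submodule.span_le, Set.singleton_subset_iff]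
        rw [← hc]
        exact aux_conj hw0 hBw c
    rw [hLx, hL'x, hspan]
  · -- case A: there are two left-independent vectors among the right multiples,
    -- hence S is closed under right multiplication, contradicting hnotR
    exfalso
    have hex : ∃ u : Fin n → k, (∃ a : k, u = op a • w ∨ u = op a • w') ∧
        u ∉ Submodule.span k {w} := by
      rcases not_and_or.mp hB with h | h <;> push_neg at h <;> obtain ⟨a, ha⟩ := h
      · exact ⟨_, ⟨a, Or.inl rfl⟩, ha⟩
      · exact ⟨_, ⟨a, Or.inr rfl⟩, ha⟩
    obtain ⟨u, ⟨a₀, ha₀⟩, huw⟩ := hex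
    have hu_cl : ∀ b : k, op b • u ∈ S := by
      intro b
      rcases ha₀ with rfl | rfl
      · simpa [smul_smul, ← MulOpposite.op_mul] using hwS (a₀ * b)
      · simpa [smul_smul, ← MulOpposite.op_mul] using hw'S (a₀ * b)
    have huS : u ∈ S := by simpa using hu_cl 1
    have hwSmem : w ∈ S := by simpa using hwS 1
    have hind : LinearIndependent k ![u, w] := by
      rw [linearIndependent_fin2]
      refine ⟨by simpa using hw0, fun a h => huw ?_⟩
      exact Submodule.mem_span_singleton.mpr ⟨a, by simpa using h⟩
    have hspan : Submodule.span k {u, w} = S := by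
      apply Submodule.eq_of_le_of_finrank_le
      · rw [Submodule.span_le]
        exact Set.insert_subset_iff.mpr ⟨huS, Set.singleton_subset_iff.mpr hwSmem⟩
      · rw [hS2]
        have h1 := finrank_span_eq_card (R := k) hind
        have h2 : Set.range ![u, w] = {u, w} := by
          simp [Matrix.range_cons, Matrix.range_empty, Set.pair_comm]
        rw [h2] at h1
        simp only [Fintype.card_fin] at h1
        exact le_of_eq h1.symm
    let S' : Submodule kᵐᵒᵖ (Fin n → k) :=
      { carrier := (S : Set (Fin n → k))
        add_mem' := fun h h' => S.add_mem h h'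
        zero_mem' := S.zero_mem
        smul_mem' := by
          intro b y hy
          rw [SetLike.mem_coe, ← hspan] at hy
          obtain ⟨α, β, hy⟩ := Submodule.mem_span_pair.mp hy
          have hb : b • y = α • (b • u) + β • (b • w) := by
            rw [← hy, smul_add, smul_comm b α, smul_comm b β]
          show b • y ∈ (S : Set (Fin n → k))
          rw [hb]
          exact S.add_mem (S.smul_mem α (by simpa using hu_cl b.unop))
            (S.smul_mem β (by simpa using hwS b.unop)) }
    exact hnotR ⟨x, S', hPx⟩
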